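/- arXiv:1109.4798 — 4 statements merged into one kernel-verified Lean document; each statement's English description precedes it below -/
import Mathlib

section
/- Let σ(r) = 4(1 − e^{−r²/4})/r², let k ≥ 1 be an integer, and let β ≥ 1 with β ≥ k (e.g. β = αk/(8π) with α ≥ 8π). Then for all r > 0, k²/r² + β·(1 − σ(r)) ≥ e^{−1}·β^{1/2}. -/
theorem stmt_8 (k : ℕ) (hk : 1 ≤ k) (β : ℝ) (hβ : 1 ≤ β) (hkβ : (k:ℝ) ≤ β) :
    ∀ r : ℝ, 0 < r →
      (Real.exp 1)⁻¹ * Real.sqrt β ≤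
        (k:ℝ)^2 / r^2 + β * (1 - 4 * (1 - Real.exp (-r^2/4)) / r^2) := by
  intro r hr
  have hr2 : (0:ℝ) < r ^ 2 := by positivity
  have hk1 : (1:ℝ) ≤ (k:ℝ) := by exact_mod_cast hk
  have hβ0 : (0:ℝ) ≤ β := by linarith
  have hsb : (1:ℝ) ≤ Real.sqrt β := by
    rw [show (1:ℝ) = Real.sqrt 1 by simp]
    exact Real.sqrt_le_sqrt hβ
  have hs : Real.sqrt β ^ 2 = β := Real.sq_sqrt hβ0
  have he : (2:ℝ) ≤ Real.exp 1 := by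
    have := Real.add_one_le_exp (1:ℝ); linarith
  have hep : (0:ℝ) < Real.exp 1 := Real.exp_pos 1
  have hei : (Real.exp 1)⁻¹ ≤ 1/2 := by
    rw [inv_le_comm₀ (by positivity) (by norm_num)]; linarith
  have hei0 : (0:ℝ) < (Real.exp 1)⁻¹ := by positivity
  rcases le_or_gt (r ^ 2) 8 with h8 | h8
  · -- quadratic lower bound on 1 - σ
    have h1 : (-(r ^ 2 / 8)) + 1 ≤ Real.exp (-(r ^ 2 / 8)) := Real.add_one_le_exp _
    have h0 : (0:ℝ) ≤ 1 - r ^ 2 / 8 := by linarith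
    have hq : (1 - r ^ 2 / 8) ^ 2 ≤ Real.exp (-r ^ 2 / 4) := by
      have heq : Real.exp (-(r ^ 2 / 8)) ^ 2 = Real.exp (-r ^ 2 / 4) := by
        rw [sq, ← Real.exp_add]; ring_nf
      calc (1 - r ^ 2 / 8) ^ 2 ≤ Real.exp (-(r ^ 2 / 8)) ^ 2 := by
            nlinarith [Real.exp_pos (-(r ^ 2 / 8))]
        _ = Real.exp (-r ^ 2 / 4) := heq
    have hσ : 4 * (1 - Real.exp (-r ^ 2 / 4)) / r ^ 2 ≤ 1 - r ^ 2 / 16 := by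
      rw [div_le_iff₀ hr2]; nlinarith
    -- AM-GM
    have h2 := two_mul_le_add_sq ((k:ℝ) / r) (Real.sqrt β * r / 4)
    have e1 : 2 * ((k:ℝ) / r) * (Real.sqrt β * r / 4) = (k:ℝ) * Real.sqrt β / 2 := by
      field_simp; ring
    have e2 : ((k:ℝ) / r) ^ 2 = (k:ℝ) ^ 2 / r ^ 2 := by rw [div_pow]
    have e3 : (Real.sqrt β * r / 4) ^ 2 = β * (r ^ 2 / 16) := by
      rw [div_pow, mul_pow, hs]; ring
    rw [e1, e2, e3] at h2
    have hA : (Real.exp 1)⁻¹ * Real.sqrt β ≤ (k:ℝ) * Real.sqrt β / 2 := by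
      nlinarith
    have hB : β * (r ^ 2 / 16) ≤ β * (1 - 4 * (1 - Real.exp (-r ^ 2 / 4)) / r ^ 2) := by
      apply mul_le_mul_of_nonneg_left _ hβ0
      linarith
    linarith
  · -- large r : 1 - σ ≥ 1/2
    have hEpos : (0:ℝ) < Real.exp (-r ^ 2 / 4) := Real.exp_pos _
    have hσ : 4 * (1 - Real.exp (-r ^ 2 / 4)) / r ^ 2 ≤ 1/2 := by
      rw [div_le_iff₀ hr2]; nlinarith
    have hsb2 : Real.sqrt β ≤ β := by nlinarith
    have hk2 : (0:ℝ) ≤ (k:ℝ) ^ 2 / r ^ 2 := by positivity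
    have hB : (Real.exp 1)⁻¹ * Real.sqrt β ≤ β * (1/2) := by
      nlinarith
    have hC : β * (1/2) ≤ β * (1 - 4 * (1 - Real.exp (-r ^ 2 / 4)) / r ^ 2) := by
      apply mul_le_mul_of_nonneg_left _ hβ0
      linarith
    linarith
end

section
/- For any λ > 1, the function f₂(x; λ) = λ(e^{−x} − 1 + x)/(e^{−λx} − 1 + λx) extends continuously to [0,∞) with f₂(0; λ) = 1/λ, and satisfies f₂(x; λ) < 1 for all x > 0. -/
open Real Filter Set

private lemma g_pos {y : ℝ} (hy : 0 < y) : 0 < Real.exp (-y) - 1 + y := by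
  have := Real.add_one_lt_exp (x := -y) (by linarith)
  linarith

private lemma g_est {x : ℝ} (hx : 0 ≤ x) (hx1 : x ≤ 1) :
    |Real.exp (-x) - 1 + x - x ^ 2 / 2| ≤ 2 / 9 * x ^ 3 := by
  have habs : |(-x)| ≤ 1 := by rw [abs_of_nonpos (by linarith)]; linarith
  have h := Real.exp_bound habs (n := 3) (by norm_num)
  have hsum : ∑ m ∈ Finset.range 3, (-x) ^ m / (m.factorial : ℝ)
      = 1 - x + x ^ 2 / 2 := by
    simp [Finset.sum_range_succ, Nat.factorial]
    ring
  rw [hsum, abs_neg, abs_of_nonneg hx] at h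
  norm_num [Nat.factorial] at h
  have heq2 : Real.exp (-x) - 1 + x - x ^ 2 / 2 = Real.exp (-x) - (1 - x + x ^ 2 / 2) := by ring
  rw [heq2]
  linarith [h]

private lemma h_tendsto :
    Filter.Tendsto (fun x : ℝ => (Real.exp (-x) - 1 + x) / x ^ 2)
      (nhdsWithin 0 (Set.Ioi 0)) (nhds (1 / 2)) := by
  have hlo : Filter.Tendsto (fun x : ℝ => 1/2 - 2/9 * x) (nhdsWithin 0 (Set.Ioi 0))
      (nhds (1/2)) := by
    have : Filter.Tendsto (fun x : ℝ => 1/2 - 2/9 * x) (nhds 0) (nhds (1/2 - 2/9 * 0)) :=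
      (Continuous.tendsto (by continuity) 0)
    simpa using this.mono_left nhdsWithin_le_nhds
  have hhi : Filter.Tendsto (fun x : ℝ => 1/2 + 2/9 * x) (nhdsWithin 0 (Set.Ioi 0))
      (nhds (1/2)) := by
    have : Filter.Tendsto (fun x : ℝ => 1/2 + 2/9 * x) (nhds 0) (nhds (1/2 + 2/9 * 0)) :=
      (Continuous.tendsto (by continuity) 0)
    simpa using this.mono_left nhdsWithin_le_nhds
  have hevsmall : ∀ᶠ x : ℝ in nhdsWithin 0 (Set.Ioi 0), x ∈ Set.Ioc (0:ℝ) 1 := by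
    filter_upwards [Ioc_mem_nhdsGT_of_mem (by norm_num : (0:ℝ) ∈ Set.Ico (0:ℝ) 1)] with x hx
    exact hx
  have key : ∀ x : ℝ, x ∈ Set.Ioc (0:ℝ) 1 →
      |(Real.exp (-x) - 1 + x) / x ^ 2 - 1/2| ≤ 2/9 * x := by
    intro x hx
    have hx0 : (0:ℝ) < x := hx.1
    have hx2 : (0:ℝ) < x ^ 2 := by positivity
    have := g_est hx0.le hx.2
    have heq : (Real.exp (-x) - 1 + x) / x ^ 2 - 1/2
        = (Real.exp (-x) - 1 + x - x ^ 2 / 2) / x ^ 2 := by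
      field_simp
      try ring
      try exact Or.inl (by ring)
    rw [heq, abs_div, abs_of_pos hx2, div_le_iff₀ hx2]
    calc |Real.exp (-x) - 1 + x - x ^ 2 / 2| ≤ 2/9 * x ^ 3 := this
    _ = 2/9 * x * x ^ 2 := by ring
  refine tendsto_of_tendsto_of_tendsto_of_le_of_le' hlo hhi ?_ ?_
  · filter_upwards [hevsmall] with x hx
    have := key x hx
    have := abs_le.mp this
    linarith [this.1]
  · filter_upwards [hevsmall] with x hx
    have := key x hx
    have := abs_le.mp this
    linarith [this.2]

theorem stmt_16 (lam : ℝ) (hlam : 1 < lam) :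
    ContinuousOn
      (fun x : ℝ => lam * (Real.exp (-x) - 1 + x) / (Real.exp (-lam * x) - 1 + lam * x))
      (Set.Ioi 0) ∧
    Filter.Tendsto
      (fun x : ℝ => lam * (Real.exp (-x) - 1 + x) / (Real.exp (-lam * x) - 1 + lam * x))
      (nhdsWithin 0 (Set.Ioi 0)) (nhds (1 / lam)) ∧
    ∀ x : ℝ, 0 < x →
      lam * (Real.exp (-x) - 1 + x) / (Real.exp (-lam * x) - 1 + lam * x) < 1 := by
  have hlam0 : (0:ℝ) < lam := by linarith
  have hden : ∀ x : ℝ, 0 < x → 0 < Real.exp (-lam * x) - 1 + lam * x := by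
    intro x hx
    have : (-lam) * x = -(lam * x) := by ring
    rw [this]
    exact g_pos (by positivity)
  refine ⟨?_, ?_, ?_⟩
  · apply ContinuousOn.div
    · fun_prop
    · fun_prop
    · intro x hx
      exact ne_of_gt (hden x hx)
  · -- tendsto part
    have hmaps : Filter.Tendsto (fun x : ℝ => lam * x) (nhdsWithin 0 (Set.Ioi 0))
        (nhdsWithin 0 (Set.Ioi 0)) := by
      apply tendsto_nhdsWithin_of_tendsto_nhds_of_eventually_within
      · have : Filter.Tendsto (fun x : ℝ => lam * x) (nhds 0) (nhds (lam * 0)) :=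
          (Continuous.tendsto (by continuity) 0)
        simpa using this.mono_left nhdsWithin_le_nhds
      · filter_upwards [self_mem_nhdsWithin] with x hx
        exact mul_pos hlam0 hx
    have h2 : Filter.Tendsto (fun x : ℝ => lam * ((Real.exp (-(lam * x)) - 1 + lam * x) / (lam * x) ^ 2))
        (nhdsWithin 0 (Set.Ioi 0)) (nhds (lam * (1/2))) :=
      ((h_tendsto.comp hmaps).const_mul lam)
    have h3 : Filter.Tendsto
        (fun x : ℝ => ((Real.exp (-x) - 1 + x) / x ^ 2) /
          (lam * ((Real.exp (-(lam * x)) - 1 + lam * x) / (lam * x) ^ 2)))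
        (nhdsWithin 0 (Set.Ioi 0)) (nhds ((1/2) / (lam * (1/2)))) :=
      h_tendsto.div h2 (by positivity)
    have hval : (1/2 : ℝ) / (lam * (1/2)) = 1 / lam := by field_simp
    rw [hval] at h3
    refine h3.congr' ?_
    filter_upwards [self_mem_nhdsWithin] with x hx
    have hx0 : (0:ℝ) < x := hx
    have hgl : 0 < Real.exp (-(lam * x)) - 1 + lam * x := g_pos (by positivity)
    have hneg : (-lam) * x = -(lam * x) := by ring
    rw [hneg]
    field_simp
  · intro x hx
    set F : ℝ → ℝ := fun y => (Real.exp (-(lam * y)) - 1 + lam * y)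
        - lam * (Real.exp (-y) - 1 + y) with hF
    have hderiv : ∀ y : ℝ, HasDerivAt F (lam * (Real.exp (-y) - Real.exp (-(lam * y)))) y := by
      intro y
      have h1 : HasDerivAt (fun y : ℝ => Real.exp (-(lam * y))) (-lam * Real.exp (-(lam * y))) y := by
        have : HasDerivAt (fun y : ℝ => -(lam * y)) (-lam) y := by
          have h := ((hasDerivAt_id y).const_mul lam).neg
          simp only [id, mul_one] at h
          exact h
        exact ((Real.hasDerivAt_exp (-(lam * y))).comp y this).congr_deriv (by ring : _ = -lam * Real.exp (-(lam * y)))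
      have h2 : HasDerivAt (fun y : ℝ => Real.exp (-y)) (-Real.exp (-y)) y := by
        have : HasDerivAt (fun y : ℝ => -y) (-1) y := (hasDerivAt_id y).neg
        exact ((Real.hasDerivAt_exp (-y)).comp y this).congr_deriv (by ring)
      have := (((h1.sub_const 1).add ((hasDerivAt_id y).const_mul lam)).sub
        (((h2.sub_const 1).add (hasDerivAt_id y)).const_mul lam))
      exact this.congr_deriv (by ring : _ = lam * (Real.exp (-y) - Real.exp (-(lam * y))))
    have hmono : StrictMonoOn F (Set.Ici 0) := by
      apply strictMonoOn_of_deriv_pos (convex_Ici 0)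
      · exact (Continuous.continuousOn (by fun_prop))
      · intro y hy
        rw [interior_Ici] at hy
        rw [(hderiv y).deriv]
        have hy0 : (0:ℝ) < y := hy
        have : Real.exp (-(lam * y)) < Real.exp (-y) := by
          apply Real.exp_lt_exp.mpr
          nlinarith
        nlinarith
    have hF0 : F 0 = 0 := by simp [hF]
    have hFx : 0 < F x := by
      have := hmono (Set.self_mem_Ici) (Set.mem_Ici.mpr hx.le) hx
      rwa [hF0] at this
    have hgl : 0 < Real.exp (-lam * x) - 1 + lam * x := hden x hx
    rw [div_lt_one hgl]
    have hneg : (-lam) * x = -(lam * x) := by ring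
    rw [hneg]
    simp only [hF] at hFx
    linarith
end

section
/- Fix c₀ > 0 and ε₁ ∈ (0,1). There exists c ∈ (0,1) such that for all r ≥ ε₁ e^{c₀/2}, σ(r e^{c₀/2}) ≤ (1 − c)·σ(r), where σ(r) = 4(1 − e^{−r²/4})/r². -/
theorem stmt_17 (c₀ ε₁ : ℝ) (hc₀ : 0 < c₀) (hε₁ : ε₁ ∈ Set.Ioo (0:ℝ) 1) :
    ∃ c ∈ Set.Ioo (0:ℝ) 1, ∀ r : ℝ, ε₁ * Real.exp (c₀/2) ≤ r →
      4 * (1 - Real.exp (-(r * Real.exp (c₀/2))^2/4)) / (r * Real.exp (c₀/2))^2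
        ≤ (1 - c) * (4 * (1 - Real.exp (-r^2/4)) / r^2) := by
  obtain ⟨hε₁0, hε₁1⟩ := hε₁
  set l : ℝ := Real.exp c₀ with hl
  have hl1 : 1 < l := by
    rw [hl, show (1:ℝ) = Real.exp 0 from Real.exp_zero.symm]
    exact Real.exp_lt_exp.mpr hc₀
  have hl0 : 0 < l := Real.exp_pos _
  set θ₀ : ℝ := Real.exp (-(ε₁^2 * l)/4) with hθ₀
  have hθ₀0 : 0 < θ₀ := Real.exp_pos _
  have hθ₀1 : θ₀ < 1 := by
    rw [hθ₀, Real.exp_lt_one_iff]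
    nlinarith [sq_nonneg ε₁]
  have hθ₀l : θ₀ ^ l < 1 := Real.rpow_lt_one hθ₀0.le hθ₀1 (by linarith)
  -- strict Bernoulli : 1 + l*(θ₀-1) < θ₀^l
  have hbern : 1 + l * (θ₀ - 1) < θ₀ ^ l := by
    have := one_add_mul_self_lt_rpow_one_add (s := θ₀ - 1) (by linarith) (by intro h; nlinarith)
      (p := l) hl1
    simpa using this
  have hden : 0 < l * (1 - θ₀) := by nlinarith
  set K : ℝ := (1 - θ₀ ^ l) / (l * (1 - θ₀)) with hK
  have hK0 : 0 < K := div_pos (by linarith) hden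
  have hK1 : K < 1 := by
    rw [hK, div_lt_one hden]; nlinarith
  refine ⟨1 - K, ⟨by linarith, by linarith⟩, ?_⟩
  intro r hr
  have hμ0 : 0 < Real.exp (c₀/2) := Real.exp_pos _
  have hr0 : 0 < r := lt_of_lt_of_le (by positivity) hr
  set θ : ℝ := Real.exp (-r^2/4) with hθdef
  have hθ0 : 0 < θ := Real.exp_pos _
  have hr2 : ε₁^2 * l ≤ r^2 := by
    have h1 : (ε₁ * Real.exp (c₀/2))^2 ≤ r^2 := by
      apply pow_le_pow_left₀ (by positivity) hr
    have h2 : Real.exp (c₀/2)^2 = l := by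
      rw [hl, sq, ← Real.exp_add, add_halves]
    calc ε₁^2 * l = (ε₁ * Real.exp (c₀/2))^2 := by rw [mul_pow, h2]
      _ ≤ r^2 := h1
  have hθθ₀ : θ ≤ θ₀ := Real.exp_le_exp.mpr (by linarith)
  have hθ1 : θ < 1 := lt_of_le_of_lt hθθ₀ hθ₀1
  -- rewrite LHS quantities
  have hsq : (r * Real.exp (c₀/2))^2 = r^2 * l := by
    rw [mul_pow, hl, sq (Real.exp (c₀/2)), ← Real.exp_add, add_halves]
  have hexp : Real.exp (-(r * Real.exp (c₀/2))^2/4) = θ ^ l := by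
    rw [hsq, Real.rpow_def_of_pos hθ0, hθdef, Real.log_exp]
    ring_nf
  -- secant monotonicity of convex rpow
  have key : (1 - θ ^ l) * (1 - θ₀) ≤ (1 - θ₀ ^ l) * (1 - θ) := by
    have hsec := (convexOn_rpow hl1.le).secant_mono (a := 1) (x := θ) (y := θ₀)
      (Set.mem_Ici.mpr zero_le_one) (Set.mem_Ici.mpr hθ0.le) (Set.mem_Ici.mpr hθ₀0.le)
      (ne_of_lt hθ1) (ne_of_lt hθ₀1) hθθ₀
    simp only [Real.one_rpow] at hsec
    have e1 : (θ ^ l - 1) / (θ - 1) = (1 - θ ^ l) / (1 - θ) := by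
      rw [← neg_div_neg_eq]; ring_nf
    have e2 : (θ₀ ^ l - 1) / (θ₀ - 1) = (1 - θ₀ ^ l) / (1 - θ₀) := by
      rw [← neg_div_neg_eq]; ring_nf
    rw [e1, e2, div_le_div_iff₀ (by linarith) (by linarith)] at hsec
    linarith
  have hθlpos : θ ^ l ≤ 1 := by
    exact (Real.rpow_le_one hθ0.le hθ1.le (by linarith))
  rw [hexp, hsq, sub_sub_cancel, hK, div_mul_div_comm,
    div_le_div_iff₀ (by positivity) (by positivity)]
  nlinarith [mul_le_mul_of_nonneg_left key (by positivity : (0:ℝ) ≤ 4 * l * r^2)]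
end

section
/- Fix c₀ > 0 and ε₁ ∈ (0,1). There exists c₃ ∈ (0,1) such that for all 0 < r < ε₁, one has 1 − σ(r) ≤ (1 − c₃)·(1 − σ(r e^{c₀/2})), where σ(r) = 4(1 − e^{−r²/4})/r². -/
open Real Set

lemma mono_aux {f f' : ℝ → ℝ}
    (hf : ∀ x ∈ Set.Icc (0:ℝ) (1/4), HasDerivAt f (f' x) x)
    (h0 : ∀ x ∈ Set.Ioo (0:ℝ) (1/4), 0 ≤ f' x) :
    ∀ x ∈ Set.Icc (0:ℝ) (1/4), f 0 ≤ f x := by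
  intro x hx
  have hmono : MonotoneOn f (Set.Icc 0 (1/4)) := by
    apply monotoneOn_of_deriv_nonneg (convex_Icc _ _)
    · exact fun y hy => (hf y hy).continuousAt.continuousWithinAt
    · intro y hy
      rw [interior_Icc] at hy
      exact (hf y (Set.mem_Icc_of_Ioo hy)).differentiableAt.differentiableWithinAt
    · intro y hy
      rw [interior_Icc] at hy
      rw [(hf y (Set.mem_Icc_of_Ioo hy)).deriv]
      exact h0 y hy
  exact hmono (Set.left_mem_Icc.mpr (by norm_num)) hx hx.1

lemma g_le {x : ℝ} (hx0 : 0 ≤ x) (hx : x ≤ 1/4) :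
    Real.exp (-x) - 1 + x ≤ x^2/2 := by
  have hexp : ∀ y : ℝ, HasDerivAt (fun t => Real.exp (-t)) (-Real.exp (-y)) y := by
    intro y
    simpa [Function.comp_def] using (Real.hasDerivAt_exp (-y)).comp y (hasDerivAt_neg y)
  have key := mono_aux (f := fun t => t^2/2 - Real.exp (-t) + 1 - t)
      (f' := fun t => t + Real.exp (-t) - 1)
      (by
        intro y hy
        have h := (((hasDerivAt_pow 2 y).div_const 2).sub (hexp y)).add_const 1 |>.sub (hasDerivAt_id y)
        exact h.congr_deriv (by push_cast; ring))
      (by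
        intro y hy
        have := Real.add_one_le_exp (-y)
        linarith)
  have := key x ⟨hx0, hx⟩
  simp at this
  linarith

lemma key_lemma {lam x : ℝ} (hlam : 1 < lam) (hx0 : 0 ≤ x) (hx : x ≤ 1/4) :
    (lam - 1) * Real.exp (-lam/4) * lam * x^2 / 2
      ≤ Real.exp (-(lam*x)) - lam * Real.exp (-x) + (lam - 1) := by
  have hexp : ∀ y : ℝ, HasDerivAt (fun t => Real.exp (-t)) (-Real.exp (-y)) y := by
    intro y
    simpa [Function.comp_def] using (Real.hasDerivAt_exp (-y)).comp y (hasDerivAt_neg y)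
  have hexplam : ∀ y : ℝ, HasDerivAt (fun t => Real.exp (-(lam*t))) (-lam * Real.exp (-(lam*y))) y := by
    intro y
    have h1 : HasDerivAt (fun t : ℝ => -(lam*t)) (-lam) y := by
      simpa [Pi.neg_def] using ((hasDerivAt_id y).const_mul lam).neg
    simpa [mul_comm, Function.comp_def] using (Real.hasDerivAt_exp (-(lam*y))).comp y h1
  set c : ℝ := (lam - 1) * Real.exp (-lam/4) with hc
  have hc0 : 0 < c := mul_pos (by linarith) (Real.exp_pos _)
  have key := mono_aux
      (f := fun t => Real.exp (-(lam*t)) - lam * Real.exp (-t) + (lam - 1) - c * lam * t^2 / 2)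
      (f' := fun t => -lam * Real.exp (-(lam*t)) + lam * Real.exp (-t) - c * lam * t)
      (by
        intro y hy
        have h := (((hexplam y).sub ((hexp y).const_mul lam)).add_const (lam - 1)).sub
          ((((hasDerivAt_pow 2 y).const_mul (c * lam)).div_const 2))
        exact h.congr_deriv (by push_cast; ring))
      (by
        intro y hy
        have h1 : Real.exp (-y) - Real.exp (-(lam*y)) ≥ c * y := by
          have e1 : Real.exp (-y) = Real.exp (-(lam*y)) * Real.exp ((lam-1)*y) := by
            rw [← Real.exp_add]; ring_nf
          have e2 : (lam-1)*y + 1 ≤ Real.exp ((lam-1)*y) := Real.add_one_le_exp _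
          have e3 : Real.exp (-lam/4) ≤ Real.exp (-(lam*y)) := by
            apply Real.exp_le_exp.mpr
            nlinarith [hy.1, hy.2]
          have h4 : Real.exp (-(lam*y)) * ((lam-1)*y) ≥ Real.exp (-lam/4) * ((lam-1)*y) := by
            apply mul_le_mul_of_nonneg_right e3
            nlinarith [hy.1]
          calc Real.exp (-y) - Real.exp (-(lam*y))
              = Real.exp (-(lam*y)) * (Real.exp ((lam-1)*y) - 1) := by rw [e1]; ring
            _ ≥ Real.exp (-(lam*y)) * ((lam-1)*y) := by
                apply mul_le_mul_of_nonneg_left (by linarith) (Real.exp_nonneg _)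
            _ ≥ Real.exp (-lam/4) * ((lam-1)*y) := h4
            _ = c * y := by rw [hc]; ring
        nlinarith [Real.exp_pos (-(lam*y)), Real.exp_pos (-y), hlam])
  have := key x ⟨hx0, hx⟩
  simp at this
  nlinarith [this]

theorem stmt_18 (c₀ ε₁ : ℝ) (hc₀ : 0 < c₀) (hε₁ : ε₁ ∈ Set.Ioo (0:ℝ) 1) :
    ∃ c₃ ∈ Set.Ioo (0:ℝ) 1, ∀ r : ℝ, 0 < r → r < ε₁ →
      1 - 4 * (1 - Real.exp (-r^2/4)) / r^2
        ≤ (1 - c₃) *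
          (1 - 4 * (1 - Real.exp (-(r * Real.exp (c₀/2))^2/4)) / (r * Real.exp (c₀/2))^2) := by
  set lam := Real.exp c₀ with hlamdef
  have hlam : 1 < lam := by
    calc (1:ℝ) = Real.exp 0 := Real.exp_zero.symm
    _ < lam := Real.exp_lt_exp.mpr hc₀
  have hlam0 : 0 < lam := lt_trans one_pos hlam
  set c : ℝ := (lam - 1) * Real.exp (-lam/4) with hcdef
  have hc0 : 0 < c := mul_pos (by linarith) (Real.exp_pos _)
  refine ⟨c/(1+c), ⟨by positivity, by rw [div_lt_one (by linarith)]; linarith⟩, ?_⟩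
  intro r hr hrε
  have hr1 : r < 1 := lt_trans hrε hε₁.2
  have hr2 : 0 < r^2 := by positivity
  have hr21 : r^2 < 1 := by nlinarith
  set x : ℝ := r^2/4 with hxdef
  have hx0 : 0 < x := by positivity
  have hx14 : x ≤ 1/4 := by rw [hxdef]; linarith
  -- key inequality
  have hK : (1+c) * lam * (Real.exp (-x) - 1 + x) ≤ Real.exp (-(lam*x)) - 1 + lam*x := by
    have h1 := key_lemma hlam hx0.le hx14
    have h3 : c * lam * (Real.exp (-x) - 1 + x) ≤ c * lam * (x^2/2) :=
      mul_le_mul_of_nonneg_left (g_le hx0.le hx14) (mul_pos hc0 hlam0).le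
    rw [← hcdef] at h1
    nlinarith [h1, h3]
  have hμ : (r * Real.exp (c₀/2))^2 = lam * r^2 := by
    rw [mul_pow, sq (Real.exp (c₀/2)), ← Real.exp_add, hlamdef]
    rw [show c₀/2 + c₀/2 = c₀ by ring]
    ring
  rw [hμ]
  have hLHS : 1 - 4 * (1 - Real.exp (-r^2/4)) / r^2 = (Real.exp (-x) - 1 + x) / x := by
    rw [show -r^2/4 = -x by rw [hxdef]; ring, hxdef]
    field_simp
    ring
  have hRHS : (1 - c/(1+c)) * (1 - 4 * (1 - Real.exp (-(lam*r^2)/4)) / (lam*r^2))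
      = (Real.exp (-(lam*x)) - 1 + lam*x) / ((1+c) * (lam*x)) := by
    rw [show -(lam*r^2)/4 = -(lam*x) by rw [hxdef]; ring, hxdef]
    have h1c : (0:ℝ) < 1 + c := by linarith
    field_simp
    ring
  rw [hLHS, hRHS, div_le_div_iff₀ hx0 (by positivity)]
  nlinarith [hK, hx0]
end
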